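/- Let φ ∈ L^∞(𝕋) with Fourier series ∑_{n∈ℤ} aₙ zⁿ and λ ∈ 𝕋. If the Toeplitz operator T_φ is C_λ-symmetric, then the Fourier coefficients satisfy a_{−n} = λⁿ aₙ for all n ≥ 1; equivalently φ(λ z) = φ(conj(z)) a.e. on 𝕋. -/

import Mathlib

open MeasureTheory Complex Real AddCircle
open scoped ComplexConjugate

noncomputable section

instance fact2pi : Fact (0 < 2 * π) := ⟨by positivity⟩

/-- Normalized Haar measure on the circle. -/
abbrev μH : Measure (AddCircle (2 * π)) := AddCircle.haarAddCircle

/-- The Hardy space `H²`, realized as the closed span of the nonnegative Fourier modes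
inside `L²(𝕋)`. -/
def HardyH2 : Submodule ℂ (Lp ℂ 2 μH) :=
  (Submodule.span ℂ (Set.range fun n : ℕ => fourierLp 2 (n : ℤ))).topologicalClosure

instance : CompleteSpace HardyH2 :=
  (Submodule.isClosed_topologicalClosure _).completeSpace_coe

/-- The Szegő (orthogonal) projection `P : L²(𝕋) → H²`. -/
def szego : Lp ℂ 2 μH →L[ℂ] HardyH2 := Submodule.orthogonalProjectionOnto HardyH2

/-- The Toeplitz operator `T_φ f = P(φ f)` with symbol `φ`. -/
def toeplitz (φ : AddCircle (2 * π) → ℂ)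
    (hφ : ∀ f : Lp ℂ 2 μH, MemLp (fun x => φ x * f x) 2 μH) (g : HardyH2) : HardyH2 :=
  szego ((hφ (g : Lp ℂ 2 μH)).toLp _)

/-- The Möbius transformation `φ_a`. -/
def moebius (a z : ℂ) : ℂ := (a - z) / (1 - conj a * z)

/- ### Auxiliary lemmas -/

lemma memH (k : ℕ) : fourierLp 2 (k : ℤ) ∈ HardyH2 :=
  Submodule.le_topologicalClosure _ (Submodule.subset_span ⟨k, rfl⟩)

lemma inner_fourier (k : ℤ) (f : Lp ℂ 2 μH) :
    (inner ℂ (fourierLp 2 k) f : ℂ) = fourierCoeff (f : AddCircle (2 * π) → ℂ) k := by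
  rw [← fourierBasis_repr, ← coe_fourierBasis, HilbertBasis.repr_apply_apply]

lemma fourierCoeff_congr_ae' {f g : AddCircle (2 * π) → ℂ} (h : f =ᵐ[μH] g) (k : ℤ) :
    fourierCoeff f k = fourierCoeff g k := by
  unfold fourierCoeff
  exact integral_congr_ae (h.mono fun x hx => by dsimp only; rw [hx])

lemma fourierCoeff_mul_fourier (f : AddCircle (2 * π) → ℂ) (m k : ℤ) :
    fourierCoeff (fun x => f x * fourier m x) k = fourierCoeff f (k - m) := by
  unfold fourierCoeff
  refine integral_congr_ae (.of_forall fun x => ?_)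
  simp only [smul_eq_mul]
  rw [show -(k - m) = -k + m by ring, fourier_add]
  ring

lemma fourierCoeff_zero_eq (f : AddCircle (2 * π) → ℂ) :
    fourierCoeff f 0 = ∫ x, f x ∂μH := by
  unfold fourierCoeff
  simp [fourier_zero]

lemma mp_sub (c : AddCircle (2 * π)) : MeasurePreserving (fun x => c - x) μH μH :=
  Measure.measurePreserving_sub_left μH c

lemma toCircle_nsmul (n : ℕ) (c : AddCircle (2 * π)) :
    ((toCircle (n • c) : Circle) : ℂ) = (toCircle c : ℂ) ^ n := by
  induction n with
  | zero => simp
  | succ n ih => rw [succ_nsmul, toCircle_add, Circle.coe_mul, ih, pow_succ]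

lemma fourier_apply_add (m : ℤ) (x y : AddCircle (2 * π)) :
    fourier m (x + y) = fourier m x * fourier m y := by
  simp only [fourier_apply, smul_add, toCircle_add, Circle.coe_mul]

lemma conj_fourier_sub (c x : AddCircle (2 * π)) (n : ℕ) :
    (starRingEnd ℂ) (fourier (n : ℤ) (c - x)) =
      (starRingEnd ℂ) ((toCircle c : ℂ) ^ n) * fourier (n : ℤ) x := by
  have h2 : fourier (-(n : ℤ)) (-x) = fourier (n : ℤ) x := by
    rw [fourier_apply, fourier_apply, smul_neg, neg_zsmul, neg_neg]
  have h3 : fourier (-(n : ℤ)) c = (starRingEnd ℂ) ((toCircle c : ℂ) ^ n) := by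
    rw [fourier_neg]
    congr 1
    rw [fourier_apply, natCast_zsmul, _root_.toCircle_nsmul]
  rw [← fourier_neg, sub_eq_add_neg, fourier_apply_add, h2, h3]

lemma toeplitz_coeff (φ : AddCircle (2 * π) → ℂ)
    (hφm : ∀ h : Lp ℂ 2 μH, MemLp (fun x => φ x * h x) 2 μH)
    (k : ℕ) (h : HardyH2) :
    fourierCoeff ((toeplitz φ hφm h : Lp ℂ 2 μH) : AddCircle (2 * π) → ℂ) (k : ℤ) =
      fourierCoeff (fun x => φ x * (h : Lp ℂ 2 μH) x) (k : ℤ) := by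
  rw [← inner_fourier]
  have h1 : (inner ℂ (fourierLp 2 (k : ℤ)) ((toeplitz φ hφm h : Lp ℂ 2 μH)) : ℂ)
      = (inner ℂ ((⟨fourierLp 2 (k : ℤ), memH k⟩ : HardyH2)) (toeplitz φ hφm h) : ℂ) := rfl
  rw [h1]
  show (inner ℂ ((⟨fourierLp 2 (k : ℤ), memH k⟩ : HardyH2))
      (Submodule.orthogonalProjectionOnto HardyH2 ((hφm (h : Lp ℂ 2 μH)).toLp _)) : ℂ) = _
  rw [Submodule.inner_orthogonalProjectionOnto_eq_of_mem_left, inner_fourier]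
  exact fourierCoeff_congr_ae' ((hφm _).coeFn_toLp) _

/-- If `T_φ` is `C_λ`-symmetric with `λ = toCircle c`, then the Fourier coefficients of `φ`
satisfy `a₋ₙ = λⁿ aₙ` for all `n ≥ 1`. -/
theorem stmt9 (c : AddCircle (2 * π))
    (CL : Lp ℂ 2 μH → Lp ℂ 2 μH)
    (hCL : ∀ h : Lp ℂ 2 μH,
      (CL h : AddCircle (2 * π) → ℂ) =ᵐ[μH] fun x => conj (h (c - x)))
    (hCLH : ∀ h : Lp ℂ 2 μH, h ∈ HardyH2 → CL h ∈ HardyH2)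
    (φ : AddCircle (2 * π) → ℂ) (hφb : MemLp φ ⊤ μH)
    (hφm : ∀ h : Lp ℂ 2 μH, MemLp (fun x => φ x * h x) 2 μH)
    (hsym : ∀ g h : HardyH2,
      (inner ℂ (CL ((toeplitz φ hφm ⟨CL (g : Lp ℂ 2 μH), hCLH _ g.2⟩ : HardyH2) : Lp ℂ 2 μH))
          ((h : HardyH2) : Lp ℂ 2 μH) : ℂ) =
        (inner ℂ ((g : HardyH2) : Lp ℂ 2 μH)
          ((toeplitz φ hφm h : HardyH2) : Lp ℂ 2 μH) : ℂ)) :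
    ∀ n : ℕ, 1 ≤ n →
      fourierCoeff φ (-(n : ℤ)) = (AddCircle.toCircle c : ℂ) ^ n * fourierCoeff φ (n : ℤ) := by
  intro n _
  set lam : ℂ := (toCircle c : ℂ) with hlam
  have h0mem : fourierLp 2 ((0 : ℕ) : ℤ) ∈ HardyH2 := memH 0
  set g : HardyH2 := ⟨fourierLp 2 (n : ℤ), memH n⟩ with hg
  set h0 : HardyH2 := ⟨fourierLp 2 ((0 : ℕ) : ℤ), h0mem⟩ with hh0
  -- fourier coefficient at 0 of CL u
  have hCL0 : ∀ u : Lp ℂ 2 μH,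
      fourierCoeff ((CL u : Lp ℂ 2 μH) : AddCircle (2 * π) → ℂ) 0 =
        conj (fourierCoeff ((u : Lp ℂ 2 μH) : AddCircle (2 * π) → ℂ) 0) := by
    intro u
    rw [fourierCoeff_congr_ae' (hCL u) 0, fourierCoeff_zero_eq, fourierCoeff_zero_eq]
    rw [show (∫ x, conj (u (c - x)) ∂μH) = ∫ x, conj (u x) ∂μH from
      integral_sub_left_eq_self (fun x => conj (u x)) μH c]
    exact integral_conj
  -- a.e. description of `CL (fourierLp 2 n)`
  have hcomp : (fun x => ((fourierLp 2 (n : ℤ) : Lp ℂ 2 μH) : AddCircle (2 * π) → ℂ) (c - x))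
      =ᵐ[μH] fun x => fourier (n : ℤ) (c - x) :=
    (mp_sub c).quasiMeasurePreserving.ae_eq_comp (coeFn_fourierLp 2 (n : ℤ))
  have hen : ((CL (fourierLp 2 (n : ℤ)) : Lp ℂ 2 μH) : AddCircle (2 * π) → ℂ)
      =ᵐ[μH] fun x => conj (lam ^ n) * fourier (n : ℤ) x := by
    filter_upwards [hCL (fourierLp 2 (n : ℤ)), hcomp] with x hx hx2
    rw [hx]
    rw [hx2, conj_fourier_sub, hlam]
  have key := hsym g h0
  -- compute the right-hand side
  have hRHS : (inner ℂ ((g : Lp ℂ 2 μH)) ((toeplitz φ hφm h0 : Lp ℂ 2 μH)) : ℂ)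
      = fourierCoeff φ (n : ℤ) := by
    rw [hg]
    show (inner ℂ (fourierLp 2 (n : ℤ)) ((toeplitz φ hφm h0 : Lp ℂ 2 μH)) : ℂ) = _
    rw [inner_fourier, toeplitz_coeff φ hφm n h0]
    refine fourierCoeff_congr_ae' ?_ _
    filter_upwards [coeFn_fourierLp 2 ((0 : ℕ) : ℤ)] with x hx

    rw [hx]
    push_cast
    rw [fourier_zero, mul_one]
  -- compute the left-hand side
  have hLHS : (inner ℂ (CL ((toeplitz φ hφm ⟨CL (g : Lp ℂ 2 μH), hCLH _ g.2⟩ : HardyH2) : Lp ℂ 2 μH))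
      ((h0 : Lp ℂ 2 μH)) : ℂ) = conj (lam ^ n) * fourierCoeff φ (-(n : ℤ)) := by
    rw [← inner_conj_symm]
    have : ((h0 : Lp ℂ 2 μH)) = fourierLp 2 ((0 : ℕ) : ℤ) := rfl
    rw [this]
    push_cast
    rw [inner_fourier, hCL0, Complex.conj_conj]
    have hT0 := toeplitz_coeff φ hφm 0 ⟨CL (g : Lp ℂ 2 μH), hCLH _ g.2⟩
    push_cast at hT0
    rw [hT0]
    have : (fun x => φ x * ((CL (g : Lp ℂ 2 μH) : Lp ℂ 2 μH) : AddCircle (2 * π) → ℂ) x)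
        =ᵐ[μH] fun x => conj (lam ^ n) * (φ x * fourier (n : ℤ) x) := by
      filter_upwards [hen] with x hx

      rw [hx]
      ring
    rw [fourierCoeff_congr_ae' this 0, fourierCoeff.const_mul, fourierCoeff_mul_fourier]
    norm_num
  rw [hLHS, hRHS] at key
  have hunit : lam ^ n * conj (lam ^ n) = 1 := by
    rw [Complex.mul_conj]
    have h1 : Complex.normSq lam = 1 := by
      rw [Complex.normSq_eq_norm_sq, hlam, Circle.norm_coe, one_pow]
    rw [map_pow, h1, one_pow, Complex.ofReal_one]
  linear_combination (lam ^ n) * key - (fourierCoeff φ (-(n : ℤ))) * hunit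

end
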